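/- For every real γ ≥ 2, the function f is a probability density on (0, c): it is nonnegative there and ∫₀^c f(r) dr = 1. -/

import Mathlib

open MeasureTheory Real Filter

open Set


lemma rpow_neg_half_eq {x : ℝ} (hx : 0 ≤ x) : x ^ (-(1/2) : ℝ) = (Real.sqrt x)⁻¹ := by
  rw [Real.rpow_neg hx, Real.sqrt_eq_rpow]

lemma integrable_aux (c : ℝ) (h0 : 0 < c) (h1 : c ≤ 1) :
    IntervalIntegrable (fun r => Real.sqrt (c - r) / ((1 - r) * Real.sqrt r))
      volume 0 c := by
  have hbase1 : IntervalIntegrable (fun x : ℝ => x ^ (-(1/2) : ℝ)) volume 0 c :=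
    intervalIntegral.intervalIntegrable_rpow' (by norm_num)
  have hbase2 : IntervalIntegrable (fun x : ℝ => (c - x) ^ (-(1/2) : ℝ)) volume 0 c := by
    have := (intervalIntegral.intervalIntegrable_rpow' (a := c) (b := 0)
      (r := -(1/2)) (by norm_num)).comp_sub_left c
    simpa using this
  have hbase : IntervalIntegrable
      (fun x : ℝ => (Real.sqrt (c/2))⁻¹ * (x ^ (-(1/2) : ℝ) + (c - x) ^ (-(1/2) : ℝ)))
      volume 0 c := ((hbase1.add hbase2).const_mul _)
  apply hbase.mono_fun
  · apply Measurable.aestronglyMeasurable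
    fun_prop
  · rw [Set.uIoc_of_le h0.le]
    refine (ae_restrict_iff' measurableSet_Ioc).2 (ae_of_all _ ?_)
    intro x hx
    obtain ⟨hx0, hxc⟩ := hx
    have hs1 : 0 < Real.sqrt x := Real.sqrt_pos.2 hx0
    have hs2 : 0 ≤ Real.sqrt (c - x) := Real.sqrt_nonneg _
    have hC : 0 < (Real.sqrt (c/2))⁻¹ := by positivity
    have h1x : 0 < 1 - x + (c - x) → True := fun _ => trivial
    simp only [Real.norm_eq_abs]
    rw [rpow_neg_half_eq hx0.le, rpow_neg_half_eq (by linarith : (0:ℝ) ≤ c - x)]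
    have hrhs : 0 ≤ (Real.sqrt (c/2))⁻¹ * ((Real.sqrt x)⁻¹ + (Real.sqrt (c-x))⁻¹) := by
      positivity
    have h1x0 : (0:ℝ) ≤ 1 - x := by linarith
    rw [abs_of_nonneg (div_nonneg (Real.sqrt_nonneg _) (mul_nonneg h1x0 (Real.sqrt_nonneg _))),
      abs_of_nonneg hrhs]
    -- main bound
    rcases eq_or_lt_of_le hxc with h | hxc'
    · subst h
      simp only [sub_self, Real.sqrt_zero]
      rw [zero_div]
      positivity
    · have hcx : 0 < c - x := by linarith
      have hs2' : 0 < Real.sqrt (c - x) := Real.sqrt_pos.2 hcx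
      have h1x : 0 < 1 - x := by linarith
      have step1 : Real.sqrt (c - x) / ((1 - x) * Real.sqrt x)
          ≤ (Real.sqrt x)⁻¹ * (Real.sqrt (c - x))⁻¹ := by
        rw [div_le_iff₀ (by positivity)]
        have hkey : Real.sqrt (c-x) * Real.sqrt (c-x) = c - x := Real.mul_self_sqrt hcx.le
        have : c - x ≤ 1 - x := by linarith
        calc Real.sqrt (c - x) = (c - x) * (Real.sqrt (c-x))⁻¹ := by
              field_simp; exact Real.sq_sqrt hcx.le
          _ ≤ ((Real.sqrt x)⁻¹ * (Real.sqrt (c - x))⁻¹) * ((1 - x) * Real.sqrt x) := by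
              rw [show ((Real.sqrt x)⁻¹ * (Real.sqrt (c - x))⁻¹) * ((1 - x) * Real.sqrt x)
                  = (1-x) * (Real.sqrt (c-x))⁻¹ by field_simp [hs1.ne']]
              apply mul_le_mul_of_nonneg_right this (by positivity)
      refine step1.trans ?_
      -- 1/(s1 s2) ≤ C (1/s1 + 1/s2)
      rcases le_total x (c/2) with hhalf | hhalf
      · have : Real.sqrt (c/2) ≤ Real.sqrt (c - x) := Real.sqrt_le_sqrt (by linarith)
        have h2 : (Real.sqrt (c-x))⁻¹ ≤ (Real.sqrt (c/2))⁻¹ :=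
          inv_anti₀ (by positivity) this
        calc (Real.sqrt x)⁻¹ * (Real.sqrt (c - x))⁻¹
            ≤ (Real.sqrt x)⁻¹ * (Real.sqrt (c/2))⁻¹ :=
              mul_le_mul_of_nonneg_left h2 (by positivity)
          _ = (Real.sqrt (c/2))⁻¹ * (Real.sqrt x)⁻¹ := by ring
          _ ≤ (Real.sqrt (c/2))⁻¹ * ((Real.sqrt x)⁻¹ + (Real.sqrt (c-x))⁻¹) := by
              apply mul_le_mul_of_nonneg_left _ hC.le
              simp only [le_add_iff_nonneg_right]
              positivity
      · have : Real.sqrt (c/2) ≤ Real.sqrt x := Real.sqrt_le_sqrt (by linarith)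
        have h2 : (Real.sqrt x)⁻¹ ≤ (Real.sqrt (c/2))⁻¹ :=
          inv_anti₀ (by positivity) this
        calc (Real.sqrt x)⁻¹ * (Real.sqrt (c - x))⁻¹
            ≤ (Real.sqrt (c/2))⁻¹ * (Real.sqrt (c-x))⁻¹ :=
              mul_le_mul_of_nonneg_right h2 (by positivity)
          _ ≤ (Real.sqrt (c/2))⁻¹ * ((Real.sqrt x)⁻¹ + (Real.sqrt (c-x))⁻¹) := by
              apply mul_le_mul_of_nonneg_left _ hC.le
              simp only [le_add_iff_nonneg_left]
              positivity

lemma hasDeriv_aux (c : ℝ) (h0 : 0 < c) (h1 : c ≤ 1) {r : ℝ} (hr : r ∈ Set.Ioo 0 c) :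
    HasDerivAt (fun r => Real.arcsin ((2*r - c)/c)
        + Real.sqrt (1-c) * Real.arcsin ((c - (2-c)*r)/(c*(1-r))))
      (Real.sqrt (c - r) / ((1 - r) * Real.sqrt r)) r := by
  obtain ⟨hr0, hrc⟩ := hr
  have hr1 : r < 1 := lt_of_lt_of_le hrc h1
  have h1r : 0 < 1 - r := by linarith
  have hcr : 0 < c - r := by linarith
  have hs1 : 0 < Real.sqrt r := Real.sqrt_pos.2 hr0
  have hs2 : 0 < Real.sqrt (c - r) := Real.sqrt_pos.2 hcr
  have hs1sq : Real.sqrt r ^ 2 = r := Real.sq_sqrt hr0.le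
  have hs2sq : Real.sqrt (c - r) ^ 2 = c - r := Real.sq_sqrt hcr.le
  -- part A
  have hinner : HasDerivAt (fun r : ℝ => (2*r - c)/c) (2/c) r := by
    have : HasDerivAt (fun r : ℝ => 2*r - c) 2 r := by
      simpa using ((hasDerivAt_id r).const_mul 2).sub_const c
    simpa using this.div_const c
  have hu1 : (2*r - c)/c ≠ -1 := by
    rw [ne_eq, div_eq_iff h0.ne']
    intro h; nlinarith
  have hu2 : (2*r - c)/c ≠ 1 := by
    rw [ne_eq, div_eq_iff h0.ne']
    intro h; nlinarith
  have hA : HasDerivAt (fun r : ℝ => Real.arcsin ((2*r - c)/c))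
      (1 / Real.sqrt (1 - ((2*r - c)/c)^2) * (2/c)) r :=
    by have := (Real.hasDerivAt_arcsin hu1 hu2).comp r hinner; exact this
  have hsqA : Real.sqrt (1 - ((2*r - c)/c)^2) = 2 * Real.sqrt r * Real.sqrt (c-r) / c := by
    rw [show 1 - ((2*r - c)/c)^2 = (2 * Real.sqrt r * Real.sqrt (c-r) / c)^2 by
      field_simp
      nlinarith [hs1sq, hs2sq]]
    exact Real.sqrt_sq (by positivity)
  have hA' : HasDerivAt (fun r : ℝ => Real.arcsin ((2*r - c)/c))
      (1 / (Real.sqrt r * Real.sqrt (c-r))) r := by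
    convert hA using 1
    rw [hsqA]
    field_simp
  -- part B
  have hB : HasDerivAt (fun r : ℝ => Real.sqrt (1-c) * Real.arcsin ((c - (2-c)*r)/(c*(1-r))))
      (-((1-c) / ((1-r) * (Real.sqrt r * Real.sqrt (c-r))))) r := by
    rcases eq_or_lt_of_le h1 with hc1 | hc1
    · -- c = 1
      have : (fun r : ℝ => Real.sqrt (1-c) * Real.arcsin ((c - (2-c)*r)/(c*(1-r))))
          = fun _ => (0:ℝ) := by
        funext x
        rw [← hc1]
        simp
      rw [this, ← hc1]
      simpa using hasDerivAt_const r (0:ℝ)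
    · -- c < 1
      have h1c : 0 < 1 - c := by linarith
      have hs3 : 0 < Real.sqrt (1-c) := Real.sqrt_pos.2 h1c
      have hs3sq : Real.sqrt (1-c) ^ 2 = 1 - c := Real.sq_sqrt h1c.le
      have hden : (0:ℝ) < c * (1-r) := by positivity
      have hnum : HasDerivAt (fun r : ℝ => c - (2-c)*r) (-(2-c)) r := by
        simpa using ((hasDerivAt_id r).const_mul (2-c)).const_sub c
      have hdenD : HasDerivAt (fun r : ℝ => c * (1-r)) (-c) r := by
        simpa using ((hasDerivAt_id r).const_sub 1).const_mul c
      have hv : HasDerivAt (fun r : ℝ => (c - (2-c)*r)/(c*(1-r)))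
          ((-(2-c) * (c*(1-r)) - (c - (2-c)*r) * (-c)) / (c*(1-r))^2) r :=
        hnum.div hdenD hden.ne'
      have hvlt : (c - (2-c)*r)/(c*(1-r)) < 1 := by
        rw [div_lt_one hden]; nlinarith
      have hvgt : -1 < (c - (2-c)*r)/(c*(1-r)) := by
        rw [lt_div_iff₀ hden]; nlinarith
      have harc : HasDerivAt (fun r : ℝ => Real.arcsin ((c - (2-c)*r)/(c*(1-r))))
          (1 / Real.sqrt (1 - ((c - (2-c)*r)/(c*(1-r)))^2)
            * ((-(2-c) * (c*(1-r)) - (c - (2-c)*r) * (-c)) / (c*(1-r))^2)) r :=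
        by have := (Real.hasDerivAt_arcsin hvgt.ne' hvlt.ne).comp r hv; exact this
      have hsqB : Real.sqrt (1 - ((c - (2-c)*r)/(c*(1-r)))^2)
          = 2 * Real.sqrt (1-c) * Real.sqrt r * Real.sqrt (c-r) / (c*(1-r)) := by
        rw [show 1 - ((c - (2-c)*r)/(c*(1-r)))^2
            = (2 * Real.sqrt (1-c) * Real.sqrt r * Real.sqrt (c-r) / (c*(1-r)))^2 by
          field_simp
          linear_combination (-4*Real.sqrt r^2*Real.sqrt (c-r)^2)*hs3sq
            + (-4*(1-c)*Real.sqrt (c-r)^2)*hs1sq + (-4*(1-c)*r)*hs2sq]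
        exact Real.sqrt_sq (by positivity)
      have := harc.const_mul (Real.sqrt (1-c))
      refine this.congr_deriv (Eq.symm ?_)
      rw [hsqB]
      field_simp
      ring
  have := hA'.add hB
  refine this.congr_deriv (Eq.symm ?_)
  have : Real.sqrt (c - r) = (c - r) / Real.sqrt (c - r) := by
    rw [eq_div_iff hs2.ne']
    nlinarith [hs2sq]
  field_simp
  linear_combination hs2sq

section
variable (c : ℝ)

lemma integral_aux (c : ℝ) (h0 : 0 < c) (h1 : c ≤ 1) :
    ∫ r in (0:ℝ)..c, Real.sqrt (c - r) / ((1 - r) * Real.sqrt r)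
      = π * (1 - Real.sqrt (1-c)) := by
  set F : ℝ → ℝ := fun r => Real.arcsin ((2*r - c)/c)
      + Real.sqrt (1-c) * Real.arcsin ((c - (2-c)*r)/(c*(1-r))) with hF
  have hderiv : ∀ x ∈ Set.Ioo (0:ℝ) c,
      HasDerivAt F (Real.sqrt (c - x) / ((1 - x) * Real.sqrt x)) x :=
    fun x hx => hasDeriv_aux c h0 h1 hx
  have hint := integrable_aux c h0 h1
  have ha : Tendsto F (nhdsWithin 0 (Set.Ioi 0)) (nhds (-(π/2) + Real.sqrt (1-c) * (π/2))) := by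
    have hcont : ContinuousAt F 0 := by
      apply ContinuousAt.add
      · exact Real.continuous_arcsin.continuousAt.comp (by fun_prop)
      · apply ContinuousAt.mul continuousAt_const
        apply Real.continuous_arcsin.continuousAt.comp
        apply ContinuousAt.div (by fun_prop) (by fun_prop)
        norm_num [h0.ne']
    have hF0 : F 0 = -(π/2) + Real.sqrt (1-c) * (π/2) := by
      simp only [hF]
      rw [show (2*(0:ℝ) - c)/c = -1 by field_simp; ring,
        show (c - (2-c)*(0:ℝ))/(c*(1-0)) = 1 by field_simp; ring]
      simp [Real.arcsin_neg_one, Real.arcsin_one]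
    rw [← hF0]
    exact hcont.continuousWithinAt.tendsto
  have hb : Tendsto F (nhdsWithin c (Set.Iio c)) (nhds (π/2 - Real.sqrt (1-c) * (π/2))) := by
    rcases eq_or_lt_of_le h1 with hc1 | hc1
    · -- c = 1
      subst hc1
      have hFeq : F = fun r => Real.arcsin (2*r - 1) := by
        funext x
        simp only [hF]
        norm_num
      rw [hFeq]
      have hco : ContinuousAt (fun r : ℝ => Real.arcsin (2*r - 1)) 1 := by
        exact Real.continuous_arcsin.continuousAt.comp (by fun_prop)
      have h2 : (fun r : ℝ => Real.arcsin (2*r - 1)) 1 = π/2 - Real.sqrt (1-1) * (π/2) := by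
        norm_num [Real.arcsin_one]
      rw [← h2]
      exact hco.continuousWithinAt.tendsto
    · have h1c : 0 < 1 - c := by linarith
      have hcont : ContinuousAt F c := by
        apply ContinuousAt.add
        · exact Real.continuous_arcsin.continuousAt.comp (by fun_prop)
        · apply ContinuousAt.mul continuousAt_const
          apply Real.continuous_arcsin.continuousAt.comp
          apply ContinuousAt.div (by fun_prop) (by fun_prop)
          positivity
      have hFc : F c = π/2 - Real.sqrt (1-c) * (π/2) := by
        simp only [hF]
        rw [show (2*c - c)/c = 1 by field_simp; ring,
          show (c - (2-c)*c)/(c*(1-c)) = -1 by field_simp; ring]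
        simp [Real.arcsin_one, Real.arcsin_neg_one]
        ring
      rw [← hFc]
      exact hcont.continuousWithinAt.tendsto
  have := intervalIntegral.integral_eq_sub_of_hasDerivAt_of_tendsto h0 hderiv hint ha hb
  rw [this]
  ring
end
theorem statement11 (γ : ℝ) (hγ : 2 ≤ γ) :
    (∀ r ∈ Set.Ioo (0 : ℝ) (4 * (γ - 1) / γ ^ 2),
      0 ≤ (1 / (2 * π * (1 - r))) * Real.sqrt (4 * (γ - 1) * (1 - r) / r - (γ - 2) ^ 2)) ∧
    ∫ r in (0 : ℝ)..(4 * (γ - 1) / γ ^ 2),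
      (1 / (2 * π * (1 - r))) * Real.sqrt (4 * (γ - 1) * (1 - r) / r - (γ - 2) ^ 2) = 1 := by
  have hγ0 : (0:ℝ) < γ := by linarith
  set c : ℝ := 4 * (γ - 1) / γ ^ 2 with hc
  have hc0 : 0 < c := div_pos (by nlinarith) (by positivity)
  have hc1 : c ≤ 1 := by
    rw [hc, div_le_one (by positivity)]
    nlinarith [sq_nonneg (γ - 2)]
  constructor
  · intro r hr
    have h1r : 0 < 1 - r := by
      have := hr.2.trans_le hc1
      linarith
    apply mul_nonneg
    · apply div_nonneg zero_le_one
      have := Real.pi_pos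
      positivity
    · exact Real.sqrt_nonneg _
  · have hae : ∀ᵐ (x : ℝ) ∂volume, x ≠ c := by
      have : volume ({c} : Set ℝ) = 0 := measure_singleton c
      rw [ae_iff]
      simp [Set.setOf_eq_eq_singleton', this]
    have key : ∀ᵐ (x : ℝ) ∂volume, x ∈ Set.uIoc (0:ℝ) c →
        (1 / (2 * π * (1 - x))) * Real.sqrt (4 * (γ - 1) * (1 - x) / x - (γ - 2) ^ 2)
          = (γ / (2 * π)) * (Real.sqrt (c - x) / ((1 - x) * Real.sqrt x)) := by
      filter_upwards [hae] with x hne hx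
      rw [Set.uIoc_of_le hc0.le] at hx
      have hx0 : 0 < x := hx.1
      have hxc : x < c := lt_of_le_of_ne hx.2 hne
      have h1x : 0 < 1 - x := by
        have := hxc.trans_le hc1; linarith
      have hcx : 0 < c - x := by linarith
      have hinner : 4 * (γ - 1) * (1 - x) / x - (γ - 2) ^ 2 = γ^2 * ((c - x)/x) := by
        rw [hc]
        field_simp
        ring
      rw [hinner, Real.sqrt_mul (sq_nonneg γ), Real.sqrt_sq hγ0.le,
        Real.sqrt_div hcx.le]
      have hsx : 0 < Real.sqrt x := Real.sqrt_pos.2 hx0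
      field_simp
    rw [intervalIntegral.integral_congr_ae key, intervalIntegral.integral_const_mul,
      integral_aux c hc0 hc1]
    have h1c : 1 - c = ((γ - 2)/γ)^2 := by
      rw [hc]; field_simp; ring
    rw [h1c, Real.sqrt_sq (div_nonneg (by linarith) hγ0.le)]
    have hπ := Real.pi_ne_zero
    field_simp
    ring
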